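/- Let h ∈ (0,1) and λ ∈ (0,1). Then the regularized potential F_λ = F_{1,λ} + F̄₂ is twice continuously differentiable on all of ℝ. -/

import Mathlib

/-- Convex singular part `F_{1,λ}` of the regularized Lennard--Jones potential. -/
noncomputable def F1reg (h l r : ℝ) : ℝ :=
  if r < 0 then -r^3/l + h/2 * r^2 + h*r
  else if r < 1 - l then -h * Real.log (1 - r)
  else -h * Real.log l + 3*h/2 - 2*h/l * (1 - r) + h/(2*l^2) * (1 - r)^2

/-- Non-convex regular part `F̄₂` of the regularized Lennard--Jones potential. -/
noncomputable def F2reg (h r : ℝ) : ℝ :=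
  if r < 1 then -r^3/3 - h*(r^2/2 + r)
  else -1/3 - 3*h/2 - (1 + 2*h)*(r - 1) - (2 + h)/2 * (r - 1)^2

/-- The regularized potential `F_λ = F_{1,λ} + F̄₂`. -/
noncomputable def Freg (h l r : ℝ) : ℝ := F1reg h l r + F2reg h r

/-- Glue lemma for derivatives of piecewise functions. -/
lemma glue_deriv {a x d : ℝ} {f g : ℝ → ℝ}
    (hval : f a = g a)
    (hf : x ≤ a → HasDerivAt f d x) (hg : a ≤ x → HasDerivAt g d x) :
    HasDerivAt (fun y => if y < a then f y else g y) d x := by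
  rcases lt_trichotomy x a with hx | rfl | hx
  · apply (hf hx.le).congr_of_eventuallyEq
    filter_upwards [Iio_mem_nhds hx] with y hy
    simp [Set.mem_Iio.mp hy]
  · have h1 : HasDerivWithinAt (fun y => if y < x then f y else g y) d (Set.Iic x) x := by
      refine ((hf le_rfl).hasDerivWithinAt).congr ?_ (by simp [hval.symm])
      intro y hy
      rcases eq_or_lt_of_le (Set.mem_Iic.mp hy) with rfl | hy'
      · simp [hval.symm]
      · simp [hy']
    have h2 : HasDerivWithinAt (fun y => if y < x then f y else g y) d (Set.Ici x) x := by
      refine ((hg le_rfl).hasDerivWithinAt).congr ?_ (by simp)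
      intro y hy
      simp [not_lt.mpr (Set.mem_Ici.mp hy)]
    have := h1.union h2
    rw [Set.Iic_union_Ici] at this
    exact hasDerivWithinAt_univ.mp this
  · apply (hg hx.le).congr_of_eventuallyEq
    filter_upwards [Ioi_mem_nhds hx] with y hy
    simp [not_lt.mpr (Set.mem_Ioi.mp hy).le]

/-- Glue lemma for continuity of piecewise functions. -/
lemma glue_cont {a x : ℝ} {f g : ℝ → ℝ}
    (hval : f a = g a)
    (hf : x ≤ a → ContinuousAt f x) (hg : a ≤ x → ContinuousAt g x) :
    ContinuousAt (fun y => if y < a then f y else g y) x := by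
  rcases lt_trichotomy x a with hx | rfl | hx
  · apply (hf hx.le).congr
    filter_upwards [Iio_mem_nhds hx] with y hy
    simp [Set.mem_Iio.mp hy]
  · have h1 : ContinuousWithinAt (fun y => if y < x then f y else g y) (Set.Iic x) x := by
      refine ((hf le_rfl).continuousWithinAt).congr ?_ (by simp [hval.symm])
      intro y hy
      rcases eq_or_lt_of_le (Set.mem_Iic.mp hy) with rfl | hy'
      · simp [hval.symm]
      · simp [hy']
    have h2 : ContinuousWithinAt (fun y => if y < x then f y else g y) (Set.Ici x) x := by
      refine ((hg le_rfl).continuousWithinAt).congr ?_ (by simp)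
      intro y hy
      simp [not_lt.mpr (Set.mem_Ici.mp hy)]
    have := h1.union h2
    rw [Set.Iic_union_Ici] at this
    exact (continuousWithinAt_univ _ _).mp this
  · apply (hg hx.le).congr
    filter_upwards [Ioi_mem_nhds hx] with y hy
    simp [not_lt.mpr (Set.mem_Ioi.mp hy).le]

/-- First derivative of `F1reg`. -/
noncomputable def D1 (h l r : ℝ) : ℝ :=
  if r < 0 then -(3*r^2)/l + h*r + h
  else if r < 1 - l then h/(1-r)
  else 2*h/l - h/l^2*(1-r)

/-- Second derivative of `F1reg`. -/
noncomputable def DD1 (h l r : ℝ) : ℝ :=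
  if r < 0 then -(6*r)/l + h
  else if r < 1 - l then h/(1-r)^2
  else h/l^2

/-- First derivative of `F2reg`. -/
noncomputable def D2 (h r : ℝ) : ℝ :=
  if r < 1 then -r^2 - h*(r+1) else -(1+2*h) - (2+h)*(r-1)

/-- Second derivative of `F2reg`. -/
noncomputable def DD2 (h r : ℝ) : ℝ :=
  if r < 1 then -(2*r) - h else -(2+h)

section branches
variable (h l : ℝ) (x : ℝ)

lemma hA : HasDerivAt (fun r : ℝ => -r^3/l + h/2 * r^2 + h*r)
    (-(3*x^2)/l + h*x + h) x := by
  have := (((hasDerivAt_pow 3 x).neg.div_const l).add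
    (((hasDerivAt_pow 2 x).const_mul (h/2)).add ((hasDerivAt_id x).const_mul h)))
  convert this using 1 <;> (try funext r) <;> (try simp only [id_eq]) <;>
    (try push_cast) <;> (try rfl) <;> (try simp only [Pi.add_apply, Pi.sub_apply, Pi.neg_apply]) <;> ring

lemma hA' : HasDerivAt (fun r : ℝ => -(3*r^2)/l + h*r + h) (-(6*x)/l + h) x := by
  have := ((((hasDerivAt_pow 2 x).const_mul (3:ℝ)).neg.div_const l).add
    (((hasDerivAt_id x).const_mul h).add (hasDerivAt_const x h)))
  convert this using 1 <;> (try funext r) <;> (try simp only [id_eq]) <;>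
    (try push_cast) <;> (try rfl) <;> (try simp only [Pi.add_apply, Pi.sub_apply, Pi.neg_apply]) <;> ring

lemma hB (hx : x ≠ 1) : HasDerivAt (fun r : ℝ => -h * Real.log (1 - r)) (h/(1-x)) x := by
  have hu : HasDerivAt (fun r : ℝ => 1 - r) (-1) x := (hasDerivAt_id x).const_sub 1
  have := (hu.log (by intro hc; apply hx; linarith)).const_mul (-h)
  convert this using 1 <;> (try funext r) <;> (try simp only [id_eq]) <;>
    (try push_cast) <;> (try rfl) <;> (try simp only [Pi.add_apply, Pi.sub_apply, Pi.neg_apply]) <;> ring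

lemma hB' (hx : x ≠ 1) : HasDerivAt (fun r : ℝ => h/(1-r)) (h/(1-x)^2) x := by
  have hu : HasDerivAt (fun r : ℝ => 1 - r) (-1) x := (hasDerivAt_id x).const_sub 1
  have hne : (1:ℝ) - x ≠ 0 := by intro hc; apply hx; linarith
  have := (hasDerivAt_const x h).div hu hne
  convert this using 1 <;> (try funext r) <;> (try simp only [id_eq]) <;>
    (try push_cast) <;> (try rfl) <;> (try simp only [Pi.add_apply, Pi.sub_apply, Pi.neg_apply]) <;> ring

lemma hC : HasDerivAt
    (fun r : ℝ => -h * Real.log l + 3*h/2 - 2*h/l * (1 - r) + h/(2*l^2) * (1 - r)^2)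
    (2*h/l - h/l^2*(1-x)) x := by
  have hu : HasDerivAt (fun r : ℝ => 1 - r) (-1) x := (hasDerivAt_id x).const_sub 1
  have := (((hasDerivAt_const x (-h * Real.log l)).add (hasDerivAt_const x (3*h/2))).sub
    (hu.const_mul (2*h/l))).add ((hu.pow 2).const_mul (h/(2*l^2)))
  convert this using 1 <;> (try funext r) <;> (try simp only [id_eq]) <;>
    (try push_cast) <;> (try rfl) <;> (try simp only [Pi.add_apply, Pi.sub_apply, Pi.neg_apply]) <;> ring

lemma hC' : HasDerivAt (fun r : ℝ => 2*h/l - h/l^2*(1-r)) (h/l^2) x := by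
  have hu : HasDerivAt (fun r : ℝ => 1 - r) (-1) x := (hasDerivAt_id x).const_sub 1
  have := (hasDerivAt_const x (2*h/l)).sub (hu.const_mul (h/l^2))
  convert this using 1 <;> (try funext r) <;> (try simp only [id_eq]) <;>
    (try push_cast) <;> (try rfl) <;> (try simp only [Pi.add_apply, Pi.sub_apply, Pi.neg_apply]) <;> ring

lemma hP : HasDerivAt (fun r : ℝ => -r^3/3 - h*(r^2/2 + r)) (-x^2 - h*(x+1)) x := by
  have := ((hasDerivAt_pow 3 x).neg.div_const 3).sub
    ((((hasDerivAt_pow 2 x).div_const 2).add (hasDerivAt_id x)).const_mul h)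
  convert this using 1 <;> (try funext r) <;> (try simp only [id_eq]) <;>
    (try push_cast) <;> (try rfl) <;> (try simp only [Pi.add_apply, Pi.sub_apply, Pi.neg_apply]) <;> ring

lemma hP' : HasDerivAt (fun r : ℝ => -r^2 - h*(r+1)) (-(2*x) - h) x := by
  have := (hasDerivAt_pow 2 x).neg.sub
    (((hasDerivAt_id x).add (hasDerivAt_const x 1)).const_mul h)
  convert this using 1 <;> (try funext r) <;> (try simp only [id_eq]) <;>
    (try push_cast) <;> (try rfl) <;> (try simp only [Pi.add_apply, Pi.sub_apply, Pi.neg_apply]) <;> ring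

lemma hQ : HasDerivAt
    (fun r : ℝ => -1/3 - 3*h/2 - (1 + 2*h)*(r - 1) - (2 + h)/2 * (r - 1)^2)
    (-(1+2*h) - (2+h)*(x-1)) x := by
  have hu : HasDerivAt (fun r : ℝ => r - 1) 1 x := (hasDerivAt_id x).sub_const 1
  have := (((hasDerivAt_const x (-1/3)).sub (hasDerivAt_const x (3*h/2))).sub
    (hu.const_mul (1 + 2*h))).sub ((hu.pow 2).const_mul ((2+h)/2))
  convert this using 1 <;> (try funext r) <;> (try simp only [id_eq]) <;>
    (try push_cast) <;> (try rfl) <;> (try simp only [Pi.add_apply, Pi.sub_apply, Pi.neg_apply]) <;> ring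

lemma hQ' : HasDerivAt (fun r : ℝ => -(1+2*h) - (2+h)*(r-1)) (-(2+h)) x := by
  have hu : HasDerivAt (fun r : ℝ => r - 1) 1 x := (hasDerivAt_id x).sub_const 1
  have := (hasDerivAt_const x (-(1+2*h))).sub (hu.const_mul (2+h))
  convert this using 1 <;> (try funext r) <;> (try simp only [id_eq]) <;>
    (try push_cast) <;> (try rfl) <;> (try simp only [Pi.add_apply, Pi.sub_apply, Pi.neg_apply]) <;> ring

end branches

section assemble
variable {h l : ℝ}

lemma hF1deriv (hh : 0 < h) (hl0 : 0 < l) (hl1 : l < 1) (x : ℝ) :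
    HasDerivAt (F1reg h l) (D1 h l x) x := by
  have hl0' : l ≠ 0 := ne_of_gt hl0
  have hfun : F1reg h l = fun r =>
      if r < 0 then -r^3/l + h/2 * r^2 + h*r
      else if r < 1 - l then -h * Real.log (1 - r)
      else -h * Real.log l + 3*h/2 - 2*h/l * (1 - r) + h/(2*l^2) * (1 - r)^2 := rfl
  rw [hfun]
  apply glue_deriv
  · simp [show (0:ℝ) < 1 - l by linarith]
  · intro hx
    rcases eq_or_lt_of_le hx with rfl | hx'
    · have hD : D1 h l 0 = h := by
        simp [D1, show (0:ℝ) < 1 - l by linarith]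
      rw [hD]
      convert hA h l 0 using 1; norm_num
    · have hD : D1 h l x = -(3*x^2)/l + h*x + h := by simp [D1, hx']
      rw [hD]; exact hA h l x
  · intro hx
    apply glue_deriv
    · rw [show (1:ℝ) - (1 - l) = l by ring]
      field_simp
      ring
    · intro hx2
      rcases eq_or_lt_of_le hx2 with rfl | hx'
      · have hD : D1 h l (1-l) = 2*h/l - h/l^2*(1-(1-l)) := by
          simp [D1, show ¬ ((1:ℝ) - l < 0) by linarith,
            show ¬ ((1:ℝ) - l < 1 - l) from lt_irrefl _]
        rw [hD]
        have := hB h (1-l) (by intro hc; nlinarith)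
        convert this using 1
        rw [show (1:ℝ) - (1 - l) = l by ring]
        field_simp; ring
      · have hD : D1 h l x = h/(1-x) := by
          simp [D1, show ¬ x < 0 by linarith, hx']
        rw [hD]
        exact hB h x (by intro hc; rw [hc] at hx'; linarith)
    · intro hx2
      have hD : D1 h l x = 2*h/l - h/l^2*(1-x) := by
        simp [D1, show ¬ x < 0 by linarith, show ¬ x < 1 - l by linarith]
      rw [hD]
      exact hC h l x

lemma hD1deriv (hh : 0 < h) (hl0 : 0 < l) (hl1 : l < 1) (x : ℝ) :
    HasDerivAt (D1 h l) (DD1 h l x) x := by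
  have hl0' : l ≠ 0 := ne_of_gt hl0
  have hfun : D1 h l = fun r =>
      if r < 0 then -(3*r^2)/l + h*r + h
      else if r < 1 - l then h/(1-r)
      else 2*h/l - h/l^2*(1-r) := rfl
  rw [hfun]
  apply glue_deriv
  · simp [hl1]
  · intro hx
    rcases eq_or_lt_of_le hx with rfl | hx'
    · have hD : DD1 h l 0 = h := by
        simp [DD1, show (0:ℝ) < 1 - l by linarith]
      rw [hD]
      convert hA' h l 0 using 1; norm_num
    · have hD : DD1 h l x = -(6*x)/l + h := by simp [DD1, hx']
      rw [hD]; exact hA' h l x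
  · intro hx
    apply glue_deriv
    · rw [show (1:ℝ) - (1 - l) = l by ring]
      field_simp
      ring
    · intro hx2
      rcases eq_or_lt_of_le hx2 with rfl | hx'
      · have hD : DD1 h l (1-l) = h/l^2 := by
          simp [DD1, show ¬ ((1:ℝ) - l < 0) by linarith,
            show ¬ ((1:ℝ) - l < 1 - l) from lt_irrefl _]
        rw [hD]
        have := hB' h (1-l) (by intro hc; nlinarith)
        convert this using 1
        rw [show (1:ℝ) - (1 - l) = l by ring]
      · have hD : DD1 h l x = h/(1-x)^2 := by
          simp [DD1, show ¬ x < 0 by linarith, hx']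
        rw [hD]
        exact hB' h x (by intro hc; rw [hc] at hx'; linarith)
    · intro hx2
      have hD : DD1 h l x = h/l^2 := by
        simp [DD1, show ¬ x < 0 by linarith, show ¬ x < 1 - l by linarith]
      rw [hD]
      exact hC' h l x

lemma hDD1cont (hh : 0 < h) (hl0 : 0 < l) (hl1 : l < 1) :
    Continuous (DD1 h l) := by
  have hfun : DD1 h l = fun r =>
      if r < 0 then -(6*r)/l + h
      else if r < 1 - l then h/(1-r)^2
      else h/l^2 := rfl
  rw [hfun]
  rw [continuous_iff_continuousAt]
  intro x
  apply glue_cont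
  · norm_num [hl1]
  · intro _
    exact ((continuous_const.mul continuous_id).neg.div_const l).continuousAt.add
      continuousAt_const
  · intro hx
    apply glue_cont
    · rw [show (1:ℝ) - (1 - l) = l by ring]
    · intro hx2
      have hne : ((1:ℝ) - x) ≠ 0 := by intro hc; nlinarith
      exact continuousAt_const.div
        (((continuous_const.sub continuous_id).pow 2).continuousAt)
        (pow_ne_zero 2 hne)
    · intro _
      exact continuousAt_const

lemma hF2deriv (hh : 0 < h) (x : ℝ) : HasDerivAt (F2reg h) (D2 h x) x := by
  have hfun : F2reg h = fun r =>
      if r < 1 then -r^3/3 - h*(r^2/2 + r)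
      else -1/3 - 3*h/2 - (1 + 2*h)*(r - 1) - (2 + h)/2 * (r - 1)^2 := rfl
  rw [hfun]
  apply glue_deriv
  · norm_num; ring
  · intro hx
    rcases eq_or_lt_of_le hx with rfl | hx'
    · have hD : D2 h 1 = -(1+2*h) := by simp [D2]
      rw [hD]
      convert hP h 1 using 1; ring
    · have hD : D2 h x = -x^2 - h*(x+1) := by simp [D2, hx']
      rw [hD]; exact hP h x
  · intro hx
    have hD : D2 h x = -(1+2*h) - (2+h)*(x-1) := by
      simp [D2, show ¬ x < 1 by linarith]
    rw [hD]
    exact hQ h x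

lemma hD2deriv (hh : 0 < h) (x : ℝ) : HasDerivAt (D2 h) (DD2 h x) x := by
  have hfun : D2 h = fun r =>
      if r < 1 then -r^2 - h*(r+1) else -(1+2*h) - (2+h)*(r-1) := rfl
  rw [hfun]
  apply glue_deriv
  · norm_num; ring
  · intro hx
    rcases eq_or_lt_of_le hx with rfl | hx'
    · have hD : DD2 h 1 = -(2+h) := by simp [DD2]
      rw [hD]
      convert hP' h 1 using 1; ring
    · have hD : DD2 h x = -(2*x) - h := by simp [DD2, hx']
      rw [hD]; exact hP' h x
  · intro hx
    have hD : DD2 h x = -(2+h) := by simp [DD2, show ¬ x < 1 by linarith]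
    rw [hD]
    exact hQ' h x

lemma hDD2cont (hh : 0 < h) : Continuous (DD2 h) := by
  have hfun : DD2 h = fun r =>
      if r < 1 then -(2*r) - h else -(2+h) := rfl
  rw [hfun]
  rw [continuous_iff_continuousAt]
  intro x
  apply glue_cont
  · ring
  · intro _
    exact ((continuous_const.mul continuous_id).neg.sub continuous_const).continuousAt
  · intro _
    exact continuousAt_const

end assemble

/-- The regularized potential `F_λ` is twice continuously differentiable on all of `ℝ`. -/
theorem Freg_contDiff (h l : ℝ) (hh : h ∈ Set.Ioo (0:ℝ) 1) (hl : l ∈ Set.Ioo (0:ℝ) 1) :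
    ContDiff ℝ 2 (Freg h l) := by
  obtain ⟨hh0, hh1⟩ := hh
  obtain ⟨hl0, hl1⟩ := hl
  have key : ∀ (F G GG : ℝ → ℝ), (∀ x, HasDerivAt F (G x) x) →
      (∀ x, HasDerivAt G (GG x) x) → Continuous GG → ContDiff ℝ 2 F := by
    intro F G GG hFG hGGG hc
    have hd1 : deriv F = G := funext fun x => (hFG x).deriv
    have hd2 : deriv G = GG := funext fun x => (hGGG x).deriv
    rw [show (2 : WithTop ℕ∞) = 1 + 1 by norm_num, contDiff_succ_iff_deriv]
    refine ⟨fun x => (hFG x).differentiableAt, by simp, ?_⟩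
    rw [hd1, contDiff_one_iff_deriv, hd2]
    exact ⟨fun x => (hGGG x).differentiableAt, hc⟩
  have h1 : ContDiff ℝ 2 (F1reg h l) :=
    key _ (D1 h l) (DD1 h l) (hF1deriv hh0 hl0 hl1) (hD1deriv hh0 hl0 hl1)
      (hDD1cont hh0 hl0 hl1)
  have h2 : ContDiff ℝ 2 (F2reg h) :=
    key _ (D2 h) (DD2 h) (hF2deriv hh0) (hD2deriv hh0) (hDD2cont hh0)
  have : Freg h l = fun r => F1reg h l r + F2reg h r := rfl
  rw [this]
  exact h1.add h2
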